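/- Let Q : (0,1) → ℝ be a nondecreasing function with Q ∈ L_{2+c}(0,1) for some c > 0, and let r satisfy 1/(2+c) < r < 1. Then ∫₀¹ u^r (1−u)^r dQ(u) < ∞ (the Lebesgue–Stieltjes integral with respect to dQ is finite). -/

import Mathlib

open MeasureTheory Set Filter Topology
open scoped ENNReal

theorem stmt9 (Q : StieltjesFunction ℝ) (c : ℝ) (hc : 0 < c)
    (hQint : IntegrableOn (fun u => |Q u| ^ (2 + c)) (Set.Ioo 0 1))
    (r : ℝ) (hr1 : 1 / (2 + c) < r) (hr2 : r < 1) :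
    (∫⁻ u in Set.Ioo (0:ℝ) 1, ENNReal.ofReal (u ^ r * (1 - u) ^ r) ∂Q.measure) < ⊤ := by
  have hp : (0:ℝ) < 2 + c := by linarith
  set C : ℝ := ∫ t in Ioo (0:ℝ) 1, |Q t| ^ (2 + c) with hCdef
  have hC0 : 0 ≤ C := setIntegral_nonneg measurableSet_Ioo
    (fun t _ => Real.rpow_nonneg (abs_nonneg _) _)
  set s : ℝ := 1 / (2 + c) with hsdef
  have hs0 : 0 < s := by positivity
  have hsr : s < r := hr1
  have hr0 : 0 < r := hs0.trans hsr
  -- generic comparison lemma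
  have key : ∀ (u m : ℝ), 0 < m → ∀ S : Set ℝ, MeasurableSet S → S ⊆ Ioo 0 1 →
      volume S = ENNReal.ofReal m → (∀ t ∈ S, |Q u| ≤ |Q t|) →
      |Q u| ^ (2 + c) * m ≤ C := by
    intro u m hm S hSm hSsub hvol hbd
    have hIS : IntegrableOn (fun t => |Q t| ^ (2 + c)) S volume := hQint.mono_set hSsub
    have hvolS : volume S < ⊤ := by rw [hvol]; exact ENNReal.ofReal_lt_top
    have h1 : ∫ _t in S, |Q u| ^ (2+c) ≤ ∫ t in S, |Q t| ^ (2+c) := by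
      refine setIntegral_mono_on (integrableOn_const hvolS.ne) hIS hSm ?_
      intro t ht
      exact Real.rpow_le_rpow (abs_nonneg _) (hbd t ht) hp.le
    have h2 : ∫ t in S, |Q t| ^ (2+c) ≤ C := by
      refine setIntegral_mono_set hQint ?_ hSsub.eventuallyLE
      exact Filter.Eventually.of_forall (fun t => Real.rpow_nonneg (abs_nonneg _) _)
    calc |Q u| ^ (2+c) * m = ∫ _t in S, |Q u|^(2+c) := by
          rw [setIntegral_const, measureReal_def, hvol, ENNReal.toReal_ofReal hm.le, smul_eq_mul, mul_comm]
      _ ≤ C := h1.trans h2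
  -- bound near 0
  have hbd0 : ∀ u : ℝ, 0 < u → u ≤ 1/2 → |Q u| ^ (2+c) * u ≤ C := by
    intro u hu0 hu2
    rcases le_or_gt (Q u) 0 with h | h
    · refine key u u hu0 (Ioo 0 u) measurableSet_Ioo ?_ ?_ ?_
      · intro t ht; exact ⟨ht.1, by linarith [ht.2]⟩
      · rw [Real.volume_Ioo, sub_zero]
      · intro t ht
        have ht2 : Q t ≤ Q u := Q.mono ht.2.le
        rw [abs_of_nonpos h, abs_of_nonpos (ht2.trans h)]; linarith
    · refine key u u hu0 (Ioo u (2*u)) measurableSet_Ioo ?_ ?_ ?_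
      · intro t ht; exact ⟨hu0.trans ht.1, by linarith [ht.2]⟩
      · rw [Real.volume_Ioo]; congr 1; ring
      · intro t ht
        have ht2 : Q u ≤ Q t := Q.mono ht.1.le
        rw [abs_of_pos h]; exact ht2.trans (le_abs_self _)
  -- bound near 1
  have hbd1 : ∀ u : ℝ, 1/2 ≤ u → u < 1 → |Q u| ^ (2+c) * (1-u) ≤ C := by
    intro u hu2 hu1
    have h1u : 0 < 1 - u := by linarith
    rcases le_or_gt 0 (Q u) with h | h
    · refine key u (1-u) h1u (Ioo u 1) measurableSet_Ioo ?_ ?_ ?_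
      · intro t ht; exact ⟨by linarith [ht.1], ht.2⟩
      · rw [Real.volume_Ioo]
      · intro t ht
        rw [abs_of_nonneg h]; exact (Q.mono ht.1.le).trans (le_abs_self _)
    · refine key u (1-u) h1u (Ioo (2*u-1) u) measurableSet_Ioo ?_ ?_ ?_
      · intro t ht; exact ⟨by linarith [ht.1], by linarith [ht.2]⟩
      · rw [Real.volume_Ioo]; congr 1; ring
      · intro t ht
        have ht2 : Q t ≤ Q u := Q.mono ht.2.le
        rw [abs_of_neg h, abs_of_nonpos (ht2.trans h.le)]; linarith
  -- absolute value bounds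
  have hmul : (2 + c) * s = 1 := by rw [hsdef]; field_simp
  have habs0 : ∀ u : ℝ, 0 < u → u ≤ 1/2 → |Q u| ≤ (C / u) ^ s := by
    intro u hu0 hu2
    have h' : |Q u| ^ (2+c) ≤ C / u := (le_div_iff₀ hu0).2 (hbd0 u hu0 hu2)
    have h2 := Real.rpow_le_rpow (Real.rpow_nonneg (abs_nonneg _) _) h' hs0.le
    rwa [← Real.rpow_mul (abs_nonneg _), hmul, Real.rpow_one] at h2
  have habs1 : ∀ u : ℝ, 1/2 ≤ u → u < 1 → |Q u| ≤ (C / (1-u)) ^ s := by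
    intro u hu2 hu1
    have h1u : 0 < 1 - u := by linarith
    have h' : |Q u| ^ (2+c) ≤ C / (1-u) := (le_div_iff₀ h1u).2 (hbd1 u hu2 hu1)
    have h2 := Real.rpow_le_rpow (Real.rpow_nonneg (abs_nonneg _) _) h' hs0.le
    rwa [← Real.rpow_mul (abs_nonneg _), hmul, Real.rpow_one] at h2
  -- dyadic scales
  set e : ℕ → ℝ := fun k => (2:ℝ)⁻¹ ^ (k+1) with hedef
  have h2le : (0:ℝ) ≤ 2 := by norm_num
  have he_pos : ∀ k, 0 < e k := fun k => by simp only [hedef]; positivity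
  have he_lt : ∀ k, e (k+1) < e k := by
    intro k
    simp only [hedef]
    exact pow_lt_pow_right_of_lt_one₀ (by norm_num) (by norm_num) (by omega)
  have he0 : e 0 = 1/2 := by norm_num [hedef]
  have he_half : ∀ k, e k ≤ 1/2 := by
    intro k
    have h : e k ≤ e 0 := by
      simp only [hedef]
      exact pow_le_pow_of_le_one (by norm_num) (by norm_num) (by omega)
    linarith [he0 ▸ h]
  have he_rpow : ∀ k : ℕ, e k = (2:ℝ) ^ (-((k:ℝ)+1)) := by
    intro k
    simp only [hedef]
    rw [← Real.rpow_natCast (2:ℝ)⁻¹ (k+1), Real.inv_rpow h2le, ← Real.rpow_neg h2le]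
    congr 1
    push_cast; ring
  set I : ℕ → Set ℝ := fun k => Ioc (e (k+1)) (e k) with hIdef
  set J : ℕ → Set ℝ := fun k => Ioc (1 - e k) (1 - e (k+1)) with hJdef
  -- coverage
  have hcover : Ioo (0:ℝ) 1 ⊆ (⋃ k, I k) ∪ (⋃ k, J k) := by
    intro u hu
    rcases le_or_gt u (1/2) with h | h
    · left
      have hex : ∃ n, e (n+1) < u := by
        obtain ⟨n, hn⟩ := exists_pow_lt_of_lt_one hu.1 (by norm_num : (2:ℝ)⁻¹ < 1)
        refine ⟨n, lt_of_le_of_lt ?_ hn⟩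
        simp only [hedef]
        exact pow_le_pow_of_le_one (by norm_num) (by norm_num) (by omega)
      refine mem_iUnion.2 ⟨Nat.find hex, Nat.find_spec hex, ?_⟩
      rcases Nat.eq_zero_or_pos (Nat.find hex) with hk | hk
      · rw [hk, he0]; exact h
      · have hmin := Nat.find_min hex (Nat.sub_lt hk one_pos)
        have hkk : Nat.find hex - 1 + 1 = Nat.find hex := by omega
        rw [hkk] at hmin
        exact not_lt.1 hmin
    · right
      have hv0 : 0 < 1 - u := by linarith [hu.2]
      have hex : ∃ n, e (n+1) ≤ 1 - u := by
        obtain ⟨n, hn⟩ := exists_pow_lt_of_lt_one hv0 (by norm_num : (2:ℝ)⁻¹ < 1)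
        refine ⟨n, le_trans ?_ hn.le⟩
        simp only [hedef]
        exact pow_le_pow_of_le_one (by norm_num) (by norm_num) (by omega)
      refine mem_iUnion.2 ⟨Nat.find hex, ?_, by linarith [Nat.find_spec hex]⟩
      rcases Nat.eq_zero_or_pos (Nat.find hex) with hk | hk
      · rw [hk, he0]; linarith
      · have hmin := Nat.find_min hex (Nat.sub_lt hk one_pos)
        have hkk : Nat.find hex - 1 + 1 = Nat.find hex := by omega
        rw [hkk] at hmin
        have := not_le.1 hmin
        linarith
  -- the bounding sequence
  set w : ℕ → ℝ := fun k => e k ^ r * (2 * (C / e (k+1)) ^ s) with hwdef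
  have hw0 : ∀ k, 0 ≤ w k := by
    intro k
    have h1 := he_pos k
    have h2 := he_pos (k+1)
    have h3 : 0 ≤ C / e (k+1) := div_nonneg hC0 h2.le
    simp only [hwdef]
    positivity
  -- measure bounds on pieces
  have hmono : ∀ k, (C / e k) ^ s ≤ (C / e (k+1)) ^ s := by
    intro k
    refine Real.rpow_le_rpow (div_nonneg hC0 (he_pos k).le) ?_ hs0.le
    exact div_le_div_of_nonneg_left hC0 (he_pos (k+1)) (he_lt k).le
  have hIm : ∀ k, Q.measure (I k) ≤ ENNReal.ofReal (2 * (C / e (k+1)) ^ s) := by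
    intro k
    simp only [hIdef]
    rw [StieltjesFunction.measure_Ioc]
    apply ENNReal.ofReal_le_ofReal
    have b1 : |Q (e k)| ≤ (C / e (k+1)) ^ s :=
      (habs0 _ (he_pos k) (he_half k)).trans (hmono k)
    have b2 : |Q (e (k+1))| ≤ (C / e (k+1)) ^ s := habs0 _ (he_pos _) (he_half _)
    have hb1 := le_abs_self (Q (e k))
    have hb2 := neg_abs_le (Q (e (k+1)))
    linarith
  have hJm : ∀ k, Q.measure (J k) ≤ ENNReal.ofReal (2 * (C / e (k+1)) ^ s) := by
    intro k
    simp only [hJdef]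
    rw [StieltjesFunction.measure_Ioc]
    apply ENNReal.ofReal_le_ofReal
    have hhalf : ∀ j : ℕ, |Q (1 - e j)| ≤ (C / e j) ^ s := by
      intro j
      have h := habs1 (1 - e j) (by linarith [he_half j]) (by linarith [he_pos j])
      simpa using h
    have b1 : |Q (1 - e k)| ≤ (C / e (k+1)) ^ s := (hhalf k).trans (hmono k)
    have b2 : |Q (1 - e (k+1))| ≤ (C / e (k+1)) ^ s := hhalf (k+1)
    have hb1 := le_abs_self (Q (1 - e (k+1)))
    have hb2 := neg_abs_le (Q (1 - e k))
    linarith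
  -- lintegral bounds on pieces
  have hItail : ∀ k, (∫⁻ u in I k, ENNReal.ofReal (u ^ r * (1 - u) ^ r) ∂Q.measure)
      ≤ ENNReal.ofReal (w k) := by
    intro k
    have hfI : ∀ u ∈ I k, ENNReal.ofReal (u ^ r * (1 - u) ^ r) ≤ ENNReal.ofReal (e k ^ r) := by
      intro u hu
      simp only [hIdef, mem_Ioc] at hu
      apply ENNReal.ofReal_le_ofReal
      have hu0 : 0 < u := (he_pos (k+1)).trans hu.1
      have hu2 : u ≤ 1/2 := hu.2.trans (he_half k)
      calc u ^ r * (1-u) ^ r ≤ e k ^ r * 1 :=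
            mul_le_mul (Real.rpow_le_rpow hu0.le hu.2 hr0.le)
              (Real.rpow_le_one (by linarith) (by linarith) hr0.le)
              (Real.rpow_nonneg (by linarith) _) (Real.rpow_nonneg (he_pos k).le _)
        _ = e k ^ r := mul_one _
    calc (∫⁻ u in I k, ENNReal.ofReal (u ^ r * (1 - u) ^ r) ∂Q.measure)
        ≤ ∫⁻ _u in I k, ENNReal.ofReal (e k ^ r) ∂Q.measure :=
          setLIntegral_mono measurable_const hfI
      _ = ENNReal.ofReal (e k ^ r) * Q.measure (I k) := setLIntegral_const _ _
      _ ≤ ENNReal.ofReal (e k ^ r) * ENNReal.ofReal (2 * (C / e (k+1)) ^ s) :=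
          mul_le_mul_right (hIm k) _
      _ = ENNReal.ofReal (w k) := by
          rw [← ENNReal.ofReal_mul (Real.rpow_nonneg (he_pos k).le _)]
  have hJtail : ∀ k, (∫⁻ u in J k, ENNReal.ofReal (u ^ r * (1 - u) ^ r) ∂Q.measure)
      ≤ ENNReal.ofReal (w k) := by
    intro k
    have hfJ : ∀ u ∈ J k, ENNReal.ofReal (u ^ r * (1 - u) ^ r) ≤ ENNReal.ofReal (e k ^ r) := by
      intro u hu
      simp only [hJdef, mem_Ioc] at hu
      apply ENNReal.ofReal_le_ofReal
      have hu0 : 0 ≤ u := by linarith [hu.1, he_half k]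
      have hu1 : u ≤ 1 := by linarith [hu.2, he_pos (k+1)]
      have h1u0 : 0 ≤ 1 - u := by linarith
      have h1u : 1 - u ≤ e k := by linarith [hu.1]
      calc u ^ r * (1-u) ^ r ≤ 1 * (e k ^ r) :=
            mul_le_mul (Real.rpow_le_one hu0 hu1 hr0.le)
              (Real.rpow_le_rpow h1u0 h1u hr0.le)
              (Real.rpow_nonneg h1u0 _) (by norm_num)
        _ = e k ^ r := one_mul _
    calc (∫⁻ u in J k, ENNReal.ofReal (u ^ r * (1 - u) ^ r) ∂Q.measure)
        ≤ ∫⁻ _u in J k, ENNReal.ofReal (e k ^ r) ∂Q.measure :=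
          setLIntegral_mono measurable_const hfJ
      _ = ENNReal.ofReal (e k ^ r) * Q.measure (J k) := setLIntegral_const _ _
      _ ≤ ENNReal.ofReal (e k ^ r) * ENNReal.ofReal (2 * (C / e (k+1)) ^ s) :=
          mul_le_mul_right (hJm k) _
      _ = ENNReal.ofReal (w k) := by
          rw [← ENNReal.ofReal_mul (Real.rpow_nonneg (he_pos k).le _)]
  -- summability of w
  have hwgeom : ∀ k, w k = (2 * C ^ s * (2:ℝ) ^ (2*s - r)) * ((2:ℝ) ^ (s-r)) ^ k := by
    intro k
    have hek : C / e (k+1) = C * (2:ℝ) ^ ((k:ℝ)+2) := by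
      rw [he_rpow (k+1), div_eq_mul_inv, ← Real.rpow_neg h2le]
      congr 1
      push_cast
      ring
    have hx : ∀ a b : ℝ, (2:ℝ)^a * (2 * (C^s * (2:ℝ)^b)) = 2 * C^s * (2:ℝ)^(a+b) := by
      intro a b; rw [Real.rpow_add two_pos]; ring
    have hy : ∀ a b : ℝ, 2 * C^s * (2:ℝ)^a * (2:ℝ)^b = 2 * C^s * (2:ℝ)^(a+b) := by
      intro a b; rw [Real.rpow_add two_pos]; ring
    simp only [hwdef]
    rw [hek, he_rpow k, Real.mul_rpow hC0 (Real.rpow_nonneg h2le _),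
        ← Real.rpow_natCast ((2:ℝ) ^ (s-r)) k, ← Real.rpow_mul h2le, ← Real.rpow_mul h2le,
        ← Real.rpow_mul h2le, hx, hy]
    congr 1
    ring
  have hwsum : Summable w := by
    have hq0 : (0:ℝ) ≤ (2:ℝ) ^ (s-r) := (Real.rpow_pos_of_pos two_pos _).le
    have hq1 : (2:ℝ) ^ (s-r) < 1 :=
      Real.rpow_lt_one_of_one_lt_of_neg one_lt_two (by linarith)
    have hfun : w = fun k => (2 * C ^ s * (2:ℝ) ^ (2*s - r)) * ((2:ℝ) ^ (s-r)) ^ k :=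
      funext hwgeom
    rw [hfun]
    exact (summable_geometric_of_lt_one hq0 hq1).mul_left _
  -- assemble
  have hIunion : (∫⁻ u in ⋃ k, I k, ENNReal.ofReal (u ^ r * (1 - u) ^ r) ∂Q.measure) < ⊤ := by
    calc (∫⁻ u in ⋃ k, I k, ENNReal.ofReal (u ^ r * (1 - u) ^ r) ∂Q.measure)
        ≤ ∑' k, ∫⁻ u in I k, ENNReal.ofReal (u ^ r * (1 - u) ^ r) ∂Q.measure :=
          lintegral_iUnion_le _ _
      _ ≤ ∑' k, ENNReal.ofReal (w k) := ENNReal.tsum_le_tsum hItail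
      _ = ENNReal.ofReal (∑' k, w k) := (ENNReal.ofReal_tsum_of_nonneg hw0 hwsum).symm
      _ < ⊤ := ENNReal.ofReal_lt_top
  have hJunion : (∫⁻ u in ⋃ k, J k, ENNReal.ofReal (u ^ r * (1 - u) ^ r) ∂Q.measure) < ⊤ := by
    calc (∫⁻ u in ⋃ k, J k, ENNReal.ofReal (u ^ r * (1 - u) ^ r) ∂Q.measure)
        ≤ ∑' k, ∫⁻ u in J k, ENNReal.ofReal (u ^ r * (1 - u) ^ r) ∂Q.measure :=
          lintegral_iUnion_le _ _
      _ ≤ ∑' k, ENNReal.ofReal (w k) := ENNReal.tsum_le_tsum hJtail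
      _ = ENNReal.ofReal (∑' k, w k) := (ENNReal.ofReal_tsum_of_nonneg hw0 hwsum).symm
      _ < ⊤ := ENNReal.ofReal_lt_top
  calc (∫⁻ u in Set.Ioo (0:ℝ) 1, ENNReal.ofReal (u ^ r * (1 - u) ^ r) ∂Q.measure)
      ≤ ∫⁻ u in (⋃ k, I k) ∪ (⋃ k, J k), ENNReal.ofReal (u ^ r * (1 - u) ^ r) ∂Q.measure :=
        lintegral_mono_set hcover
    _ ≤ (∫⁻ u in ⋃ k, I k, ENNReal.ofReal (u ^ r * (1 - u) ^ r) ∂Q.measure)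
        + ∫⁻ u in ⋃ k, J k, ENNReal.ofReal (u ^ r * (1 - u) ^ r) ∂Q.measure :=
        lintegral_union_le _ _ _
    _ < ⊤ := ENNReal.add_lt_top.2 ⟨hIunion, hJunion⟩
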